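/- arXiv:math/0110018 — 2 statements merged into one kernel-verified Lean document; each statement's English description precedes it below -/
import Mathlib

section
/- Let a finite group Γ act on a topological space X, and define the extended quotient as the quotient of X̂ = {(γ, x) ∈ Γ × X : γ·x = x} by the Γ-action g·(γ, x) = (gγg⁻¹, g·x). Then the extended quotient is homeomorphic to the disjoint union, over a set of representatives γ of the conjugacy classes of Γ, of the quotients X^γ / Z(γ), where X^γ = {x ∈ X : γ·x = x} is the fixed-point set and Z(γ) is the centralizer of γ in Γ. -/
/-- The "extended" space `X̂ = {(γ, x) : γ • x = x}`, a subspace of `Γ × X`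
(with `Γ` finite and discrete). -/
abbrev ExtSpace (Γ X : Type*) [Group Γ] [MulAction Γ X] : Type _ :=
  {p : Γ × X // p.1 • p.2 = p.2}

/-- The action `g • (γ, x) = (gγg⁻¹, g • x)` of `Γ` on `X̂`. -/
instance ExtSpace.mulAction (Γ X : Type*) [Group Γ] [MulAction Γ X] :
    MulAction Γ (ExtSpace Γ X) where
  smul g p := ⟨(g * p.1.1 * g⁻¹, g • p.1.2), by
    show (g * p.1.1 * g⁻¹) • (g • p.1.2) = g • p.1.2
    rw [mul_smul, mul_smul, inv_smul_smul, p.2]⟩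
  one_smul p := Subtype.ext (by
    show ((1 : Γ) * p.1.1 * (1 : Γ)⁻¹, (1 : Γ) • p.1.2) = p.1
    simp)
  mul_smul g h p := Subtype.ext (by
    show ((g * h) * p.1.1 * (g * h)⁻¹, (g * h) • p.1.2)
        = (g * (h * p.1.1 * h⁻¹) * g⁻¹, g • h • p.1.2)
    rw [Prod.mk.injEq]
    exact ⟨by group, mul_smul g h p.1.2⟩)

/-- The fixed-point set `X^γ`. -/
abbrev FixedPts {Γ : Type*} (X : Type*) [Group Γ] [MulAction Γ X] (γ : Γ) : Type _ :=
  {x : X // γ • x = x}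

/-- The centralizer `Z(γ)` acts on the fixed-point set `X^γ`. -/
instance FixedPts.mulAction (Γ X : Type*) [Group Γ] [MulAction Γ X] (γ : Γ) :
    MulAction (Subgroup.centralizer ({γ} : Set Γ)) (FixedPts X γ) where
  smul g x := ⟨(g : Γ) • x.1, by
    have hg : γ * (g : Γ) = (g : Γ) * γ :=
      Subgroup.mem_centralizer_iff.mp g.2 γ (Set.mem_singleton γ)
    calc γ • (g : Γ) • x.1 = (γ * (g : Γ)) • x.1 := (mul_smul _ _ _).symm
      _ = ((g : Γ) * γ) • x.1 := by rw [hg]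
      _ = (g : Γ) • γ • x.1 := mul_smul _ _ _
      _ = (g : Γ) • x.1 := by rw [x.2]⟩
  one_smul x := Subtype.ext (by
    show ((1 : Subgroup.centralizer ({γ} : Set Γ)) : Γ) • x.1 = x.1
    simp)
  mul_smul g h x := Subtype.ext (by
    show ((g * h : Subgroup.centralizer ({γ} : Set Γ)) : Γ) • x.1 = _
    rw [Subgroup.coe_mul, mul_smul]; rfl)

section Aux

variable {Γ X : Type*} [Group Γ] [MulAction Γ X]

/-- A chosen element conjugating the class representative to `γ`. -/
noncomputable def gelt (γ : Γ) : Γ :=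
  Classical.choose (isConj_iff.mp
    (ConjClasses.mk_eq_mk_iff_isConj.mp (Quotient.out_eq (ConjClasses.mk γ))))

lemma gelt_spec (γ : Γ) : gelt γ * (ConjClasses.mk γ).out * (gelt γ)⁻¹ = γ :=
  Classical.choose_spec (isConj_iff.mp
    (ConjClasses.mk_eq_mk_iff_isConj.mp (Quotient.out_eq (ConjClasses.mk γ))))

lemma gelt_conj_inv {g o γ : Γ} (h : g * o * g⁻¹ = γ) : g⁻¹ * γ * g = o := by
  rw [← h]; group

lemma gelt_conj (γ : Γ) : (gelt γ)⁻¹ * γ * gelt γ = (ConjClasses.mk γ).out :=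
  gelt_conj_inv (gelt_spec γ)

lemma calc_aux {a b h γ o : Γ} (h1 : a * o * a⁻¹ = γ) (h2 : b * o * b⁻¹ = h * γ * h⁻¹) :
    (b⁻¹ * h * a) * o = o * (b⁻¹ * h * a) := by
  have h1' : o = a⁻¹ * γ * a := by rw [← h1]; group
  have h2' : o = b⁻¹ * (h * γ * h⁻¹) * b := by rw [← h2]; group
  calc (b⁻¹ * h * a) * o = b⁻¹ * h * a * (a⁻¹ * γ * a) := by rw [← h1']
    _ = (b⁻¹ * (h * γ * h⁻¹) * b) * (b⁻¹ * h * a) := by group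
    _ = o * (b⁻¹ * h * a) := by rw [← h2']

/-- The target sigma type. -/
abbrev TgtSigma (Γ X : Type*) [Group Γ] [MulAction Γ X] : Type _ :=
  Σ c : ConjClasses Γ,
    Quotient (MulAction.orbitRel (Subgroup.centralizer ({Quotient.out c} : Set Γ))
      (FixedPts X (Quotient.out c)))

lemma fixed_aux (γ : Γ) {x : X} (hx : γ • x = x) :
    (ConjClasses.mk γ).out • (gelt γ)⁻¹ • x = (gelt γ)⁻¹ • x := by
  rw [← mul_smul, ← gelt_conj γ]
  rw [show (gelt γ)⁻¹ * γ * gelt γ * (gelt γ)⁻¹ = (gelt γ)⁻¹ * γ by group]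
  rw [mul_smul, hx]

/-- The underlying map `X̂ → Σ c, X^{c.out}/Z(c.out)`. -/
noncomputable def Fmap (p : ExtSpace Γ X) : TgtSigma Γ X :=
  ⟨ConjClasses.mk p.1.1,
    Quotient.mk _ (⟨(gelt p.1.1)⁻¹ • p.1.2, fixed_aux p.1.1 p.2⟩ :
      FixedPts X (ConjClasses.mk p.1.1).out)⟩

lemma sigma_eq_of {c d : ConjClasses Γ} (h : c = d)
    (y : FixedPts X (Quotient.out c)) (z : FixedPts X (Quotient.out d))
    (g : Γ) (hg : g ∈ Subgroup.centralizer ({Quotient.out d} : Set Γ))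
    (hgz : g • z.1 = y.1) :
    (⟨c, Quotient.mk _ y⟩ : TgtSigma Γ X) = ⟨d, Quotient.mk _ z⟩ := by
  subst h
  refine Sigma.ext rfl (heq_of_eq (Quotient.sound ?_))
  exact MulAction.mem_orbit_iff.mpr ⟨⟨g, hg⟩, Subtype.ext hgz⟩

lemma Fmap_wd (p q : ExtSpace Γ X)
    (hpq : (MulAction.orbitRel Γ (ExtSpace Γ X)).r p q) : Fmap p = Fmap q := by
  obtain ⟨h, rfl⟩ := MulAction.mem_orbit_iff.mp hpq
  have hc : ConjClasses.mk ((h • q).1.1) = ConjClasses.mk (q.1.1) := by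
    show ConjClasses.mk (h * q.1.1 * h⁻¹) = ConjClasses.mk q.1.1
    rw [ConjClasses.mk_eq_mk_iff_isConj, isConj_iff]
    exact ⟨h⁻¹, by group⟩
  have houts := congrArg Quotient.out hc
  unfold Fmap
  refine sigma_eq_of hc _ _ ((gelt ((h • q).1.1))⁻¹ * h * gelt q.1.1) ?_ ?_
  · rw [Subgroup.mem_centralizer_singleton_iff]
    have h1 := gelt_spec q.1.1
    have h2 := gelt_spec ((h • q).1.1)
    rw [houts] at h2
    have h2' : gelt ((h • q).1.1) * (ConjClasses.mk q.1.1).out * (gelt ((h • q).1.1))⁻¹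
        = h * q.1.1 * h⁻¹ := h2
    exact calc_aux h1 h2'
  · show ((gelt ((h • q).1.1))⁻¹ * h * gelt q.1.1) • ((gelt q.1.1)⁻¹ • q.1.2)
        = (gelt ((h • q).1.1))⁻¹ • (h • q.1.2)
    rw [← mul_smul, ← mul_smul]
    congr 1
    group


lemma Bmap_wd (c : ConjClasses Γ) (y z : FixedPts X (Quotient.out c))
    (hyz : (MulAction.orbitRel (Subgroup.centralizer ({Quotient.out c} : Set Γ))
      (FixedPts X (Quotient.out c))).r y z) :
    (Quotient.mk (MulAction.orbitRel Γ (ExtSpace Γ X))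
        (⟨(Quotient.out c, y.1), y.2⟩ : ExtSpace Γ X))
      = Quotient.mk _ (⟨(Quotient.out c, z.1), z.2⟩ : ExtSpace Γ X) := by
  obtain ⟨g, rfl⟩ := MulAction.mem_orbit_iff.mp hyz
  refine Quotient.sound (MulAction.mem_orbit_iff.mpr ⟨(g : Γ), Subtype.ext ?_⟩)
  have hg : (g : Γ) * Quotient.out c = Quotient.out c * (g : Γ) :=
    Subgroup.mem_centralizer_singleton_iff.mp g.2
  show ((g : Γ) * Quotient.out c * (g : Γ)⁻¹, (g : Γ) • z.1) = (Quotient.out c, (g : Γ) • z.1)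
  rw [hg]
  simp

/-- The forward map through the sigma decomposition. -/
noncomputable def Gmap (s : Σ γ : Γ, FixedPts X γ) : TgtSigma Γ X :=
  ⟨ConjClasses.mk s.1,
    Quotient.mk _ (⟨(gelt s.1)⁻¹ • s.2.1, fixed_aux s.1 s.2.2⟩ :
      FixedPts X (ConjClasses.mk s.1).out)⟩

/-- The backward map. -/
noncomputable def Bmap (s : TgtSigma Γ X) : Quotient (MulAction.orbitRel Γ (ExtSpace Γ X)) :=
  Quotient.lift
    (fun y : FixedPts X (Quotient.out s.1) =>
      Quotient.mk _ (⟨(Quotient.out s.1, y.1), y.2⟩ : ExtSpace Γ X))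
    (Bmap_wd s.1) s.2

lemma Bmap_Fmap (p : ExtSpace Γ X) : Bmap (Fmap p) = Quotient.mk _ p := by
  refine Quotient.sound (MulAction.mem_orbit_iff.mpr ⟨(gelt p.1.1)⁻¹, Subtype.ext ?_⟩)
  show ((gelt p.1.1)⁻¹ * p.1.1 * (gelt p.1.1)⁻¹⁻¹, (gelt p.1.1)⁻¹ • p.1.2)
      = ((ConjClasses.mk p.1.1).out, (gelt p.1.1)⁻¹ • p.1.2)
  rw [inv_inv, gelt_conj]

lemma Fmap_Bmap (c : ConjClasses Γ) (y : FixedPts X (Quotient.out c)) :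
    Fmap (⟨(Quotient.out c, y.1), y.2⟩ : ExtSpace Γ X) = ⟨c, Quotient.mk _ y⟩ := by
  have hmk : ConjClasses.mk (Quotient.out c) = c := Quotient.out_eq c
  unfold Fmap
  refine sigma_eq_of hmk _ _ (gelt (Quotient.out c))⁻¹ ?_ rfl
  have h1 := gelt_spec (Quotient.out c)
  rw [hmk] at h1
  have h2 : gelt (Quotient.out c) * Quotient.out c = Quotient.out c * gelt (Quotient.out c) :=
    mul_inv_eq_iff_eq_mul.mp h1
  exact Subgroup.inv_mem _ (Subgroup.mem_centralizer_singleton_iff.mpr h2)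

section Topology

variable [TopologicalSpace Γ] [DiscreteTopology Γ] [TopologicalSpace X]

omit [DiscreteTopology Γ] in
lemma continuous_incl (γ : Γ) :
    Continuous (fun y : FixedPts X γ => (⟨(γ, y.1), y.2⟩ : ExtSpace Γ X)) :=
  Continuous.subtype_mk (continuous_const.prodMk continuous_subtype_val) _

lemma isOpenMap_incl (γ : Γ) :
    IsOpenMap (fun y : FixedPts X γ => (⟨(γ, y.1), y.2⟩ : ExtSpace Γ X)) := by
  intro U hU
  obtain ⟨V, hV, rfl⟩ := isOpen_induced_iff.mp hU
  have himg : (fun y : FixedPts X γ => (⟨(γ, y.1), y.2⟩ : ExtSpace Γ X)) '' (Subtype.val ⁻¹' V)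
      = Subtype.val ⁻¹' (({γ} : Set Γ) ×ˢ V) := by
    ext p
    constructor
    · rintro ⟨y, hy, rfl⟩
      exact ⟨rfl, hy⟩
    · rintro ⟨h1, h2⟩
      rw [Set.mem_singleton_iff] at h1
      refine ⟨⟨p.1.2, by rw [← h1]; exact p.2⟩, h2, ?_⟩
      apply Subtype.ext
      exact Prod.ext h1.symm rfl
  rw [himg]
  exact (((isOpen_discrete _).prod hV).preimage continuous_subtype_val)

/-- `X̂` is homeomorphic to the disjoint union of the fixed-point sets. -/
noncomputable def sigmaHomeo : (Σ γ : Γ, FixedPts X γ) ≃ₜ ExtSpace Γ X :=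
  Equiv.toHomeomorphOfContinuousOpen
    { toFun := fun s => ⟨(s.1, s.2.1), s.2.2⟩
      invFun := fun p => ⟨p.1.1, p.1.2, p.2⟩
      left_inv := fun ⟨_, _⟩ => rfl
      right_inv := fun ⟨⟨_, _⟩, _⟩ => rfl }
    (continuous_sigma continuous_incl)
    (isOpenMap_sigma.mpr isOpenMap_incl)

end Topology

end Aux

/-- For a continuous action of a finite group `Γ` on a topological space `X`,
the extended quotient `X̂/Γ` is homeomorphic to the disjoint union, over representatives
`γ` of the conjugacy classes of `Γ`, of the quotients `X^γ / Z(γ)`. -/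
theorem extended_quotient_decomposition (Γ X : Type*) [Group Γ] [Finite Γ]
    [TopologicalSpace Γ] [DiscreteTopology Γ] [MulAction Γ X] [TopologicalSpace X]
    (hcont : ∀ γ : Γ, Continuous fun x : X => γ • x) :
    Nonempty ((Quotient (MulAction.orbitRel Γ (ExtSpace Γ X))) ≃ₜ
      (Σ c : ConjClasses Γ,
        Quotient (MulAction.orbitRel (Subgroup.centralizer ({Quotient.out c} : Set Γ))
          (FixedPts X (Quotient.out c))))) := by
  have hGcont : Continuous (Gmap : (Σ γ : Γ, FixedPts X γ) → TgtSigma Γ X) := by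
    refine continuous_sigma fun γ => ?_
    show Continuous fun y : FixedPts X γ =>
      (⟨ConjClasses.mk γ,
        Quotient.mk (MulAction.orbitRel
            (Subgroup.centralizer ({Quotient.out (ConjClasses.mk γ)} : Set Γ))
            (FixedPts X (Quotient.out (ConjClasses.mk γ))))
          (⟨(gelt γ)⁻¹ • y.1, fixed_aux γ y.2⟩ :
            FixedPts X (ConjClasses.mk γ).out)⟩ : TgtSigma Γ X)
    exact continuous_sigmaMk.comp (continuous_quotient_mk'.comp
      (Continuous.subtype_mk ((hcont (gelt γ)⁻¹).comp continuous_subtype_val) _))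
  have hFcont : Continuous (Fmap : ExtSpace Γ X → TgtSigma Γ X) := by
    have heq : (Fmap : ExtSpace Γ X → TgtSigma Γ X)
        = Gmap ∘ (sigmaHomeo (Γ := Γ) (X := X)).symm := rfl
    rw [heq]
    exact hGcont.comp (sigmaHomeo).symm.continuous
  have hBcont : Continuous (Bmap : TgtSigma Γ X → Quotient (MulAction.orbitRel Γ (ExtSpace Γ X))) := by
    refine continuous_sigma fun c => ?_
    show Continuous (Quotient.lift
      (fun y : FixedPts X (Quotient.out c) =>
        Quotient.mk (MulAction.orbitRel Γ (ExtSpace Γ X))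
          (⟨(Quotient.out c, y.1), y.2⟩ : ExtSpace Γ X)) (Bmap_wd c))
    exact Continuous.quotient_lift
      (continuous_quotient_mk'.comp (continuous_incl (Quotient.out c))) _
  let e : Quotient (MulAction.orbitRel Γ (ExtSpace Γ X)) ≃ TgtSigma Γ X :=
    { toFun := Quotient.lift Fmap Fmap_wd
      invFun := Bmap
      left_inv := fun q => Quotient.inductionOn q fun p => Bmap_Fmap p
      right_inv := fun s => by
        obtain ⟨c, q⟩ := s
        refine Quotient.inductionOn q fun y => ?_
        exact Fmap_Bmap c y }
  exact ⟨{ toEquiv := e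
           continuous_toFun := Continuous.quotient_lift hFcont Fmap_wd
           continuous_invFun := hBcont }⟩
end

section
/- Let γ ∈ S_n have cycle type with r_j cycles of length n_j (1 ≤ j ≤ l, n_j pairwise distinct). Then the quotient of the fixed-point set (𝕋ⁿ)^γ by the action of the centralizer Z(γ) is homeomorphic to the product over j of the symmetric products Sym^{r_j}(𝕋), where Sym^r(𝕋) = 𝕋^r / S_r. In particular, the cyclic factors (ℤ/n_j)^{r_j} of Z(γ) act trivially on (𝕋ⁿ)^γ. -/
open Equiv

/-- The coordinate-permutation action of `S_r` on the torus `𝕋^r`. -/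
instance circlePermAction (r : ℕ) : MulAction (Equiv.Perm (Fin r)) (Fin r → Circle) where
  smul σ z := fun i => z (σ⁻¹ i)
  one_smul z := funext fun i => by
    show z ((1 : Equiv.Perm (Fin r))⁻¹ i) = z i
    simp
  mul_smul σ τ z := funext fun i => by
    show z ((σ * τ)⁻¹ i) = z (τ⁻¹ (σ⁻¹ i))
    rw [mul_inv_rev, Equiv.Perm.mul_apply]

/-- The symmetric product `Sym^r 𝕋 = 𝕋^r / S_r` (with the quotient topology). -/
abbrev SymTorus (r : ℕ) : Type :=
  Quotient (MulAction.orbitRel (Equiv.Perm (Fin r)) (Fin r → Circle))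

/-- The fixed-point set `(𝕋ⁿ)^γ` of a permutation `γ ∈ S_n`. -/
abbrev TorusFix (n : ℕ) (γ : Equiv.Perm (Fin n)) : Type :=
  {z : Fin n → Circle // ∀ i, z (γ⁻¹ i) = z i}

/-- The centralizer `Z(γ)` acts on the fixed-point set `(𝕋ⁿ)^γ`. -/
instance torusFixAction (n : ℕ) (γ : Equiv.Perm (Fin n)) :
    MulAction (Subgroup.centralizer ({γ} : Set (Equiv.Perm (Fin n)))) (TorusFix n γ) where
  smul g z := ⟨fun i => z.1 ((g : Equiv.Perm (Fin n))⁻¹ i), by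
    intro i
    have hg : γ * (g : Equiv.Perm (Fin n)) = (g : Equiv.Perm (Fin n)) * γ :=
      Subgroup.mem_centralizer_iff.mp g.2 γ (Set.mem_singleton γ)
    have hinv : (g : Equiv.Perm (Fin n))⁻¹ * γ⁻¹ = γ⁻¹ * (g : Equiv.Perm (Fin n))⁻¹ := by
      rw [← mul_inv_rev, ← mul_inv_rev, hg]
    show z.1 ((g : Equiv.Perm (Fin n))⁻¹ (γ⁻¹ i)) = z.1 ((g : Equiv.Perm (Fin n))⁻¹ i)
    rw [← Equiv.Perm.mul_apply, hinv, Equiv.Perm.mul_apply, z.2]⟩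
  one_smul z := Subtype.ext (funext fun i => by
    show z.1 (((1 : Subgroup.centralizer ({γ} : Set (Equiv.Perm (Fin n)))) :
      Equiv.Perm (Fin n))⁻¹ i) = z.1 i
    simp)
  mul_smul g h z := Subtype.ext (funext fun i => by
    show z.1 (((g * h : Subgroup.centralizer ({γ} : Set (Equiv.Perm (Fin n)))) :
        Equiv.Perm (Fin n))⁻¹ i)
      = z.1 ((h : Equiv.Perm (Fin n))⁻¹ ((g : Equiv.Perm (Fin n))⁻¹ i))
    rw [Subgroup.coe_mul, mul_inv_rev, Equiv.Perm.mul_apply])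

theorem Equiv.Perm.inv_apply_self {α : Type*} (f : Equiv.Perm α) (x : α) : f⁻¹ (f x) = x :=
  Equiv.symm_apply_apply f x

theorem Equiv.Perm.apply_inv_self {α : Type*} (f : Equiv.Perm α) (x : α) : f (f⁻¹ x) = x :=
  Equiv.apply_symm_apply f x

namespace SymAux

open MulAction Function Subgroup

variable {n : ℕ}

/-- The orbit space of `γ` acting on `Fin n`. -/
abbrev OQ (n : ℕ) (γ : Equiv.Perm (Fin n)) : Type :=
  Quotient (MulAction.orbitRel (Subgroup.zpowers γ) (Fin n))

abbrev omk (γ : Equiv.Perm (Fin n)) (x : Fin n) : OQ n γ :=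
  Quotient.mk (MulAction.orbitRel (Subgroup.zpowers γ) (Fin n)) x

noncomputable abbrev osize (γ : Equiv.Perm (Fin n)) (c : OQ n γ) : ℕ :=
  Nat.card {x : Fin n // omk γ x = c}

theorem mem_orbit_zpow (γ : Equiv.Perm (Fin n)) (k : ℤ) (x : Fin n) :
    (γ ^ k) x ∈ MulAction.orbit (Subgroup.zpowers γ) x :=
  ⟨⟨γ ^ k, Subgroup.zpow_mem _ (Subgroup.mem_zpowers γ) k⟩, rfl⟩

theorem exists_zpow_of_mem_orbit {γ : Equiv.Perm (Fin n)} {x y : Fin n}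
    (h : x ∈ MulAction.orbit (Subgroup.zpowers γ) y) : ∃ k : ℤ, (γ ^ k) y = x := by
  obtain ⟨⟨u, hu⟩, rfl⟩ := h
  obtain ⟨k, rfl⟩ := Subgroup.mem_zpowers_iff.mp hu
  exact ⟨k, rfl⟩

theorem omk_eq_omk {γ : Equiv.Perm (Fin n)} {x y : Fin n} :
    omk γ x = omk γ y ↔ x ∈ MulAction.orbit (Subgroup.zpowers γ) y :=
  ⟨fun h => MulAction.orbitRel_apply.mp (Quotient.exact h),
   fun h => Quotient.sound (MulAction.orbitRel_apply.mpr h)⟩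

theorem omk_pow (γ : Equiv.Perm (Fin n)) (k : ℕ) (x : Fin n) :
    omk γ ((γ ^ k) x) = omk γ x :=
  omk_eq_omk.mpr (by have := mem_orbit_zpow γ (k : ℤ) x; rwa [zpow_natCast] at this)

theorem omk_apply (γ : Equiv.Perm (Fin n)) (x : Fin n) : omk γ (γ x) = omk γ x := by
  have := omk_pow γ 1 x; rwa [pow_one] at this

theorem omk_inv (γ : Equiv.Perm (Fin n)) (x : Fin n) : omk γ (γ⁻¹ x) = omk γ x :=
  omk_eq_omk.mpr (by have := mem_orbit_zpow γ (-1) x; rwa [zpow_neg, zpow_one] at this)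

theorem omk_out (γ : Equiv.Perm (Fin n)) (c : OQ n γ) : omk γ (Quotient.out c) = c :=
  Quotient.out_eq c

theorem out_mem_orbit (γ : Equiv.Perm (Fin n)) (x : Fin n) :
    x ∈ MulAction.orbit (Subgroup.zpowers γ) (Quotient.out (omk γ x)) :=
  omk_eq_omk.mp (omk_out γ (omk γ x)).symm

theorem mk_eq_iff_mem (γ : Equiv.Perm (Fin n)) (c : OQ n γ) (x : Fin n) :
    omk γ x = c ↔ x ∈ MulAction.orbit (Subgroup.zpowers γ) (Quotient.out c) := by
  constructor
  · intro h; exact omk_eq_omk.mp (h.trans (omk_out γ c).symm)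
  · intro h; exact (omk_eq_omk.mpr h).trans (omk_out γ c)

theorem osize_eq_card_orbit (γ : Equiv.Perm (Fin n)) (c : OQ n γ) :
    osize γ c = Nat.card (MulAction.orbit (Subgroup.zpowers γ) (Quotient.out c)) :=
  Nat.card_congr (Equiv.subtypeEquivRight fun x => mk_eq_iff_mem γ c x)

theorem osize_mk (γ : Equiv.Perm (Fin n)) (x : Fin n) :
    osize γ (omk γ x) = Nat.card (MulAction.orbit (Subgroup.zpowers γ) x) := by
  rw [osize_eq_card_orbit, ← MulAction.orbit_eq_iff.mpr (out_mem_orbit γ x)]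

theorem tf_apply_pow {γ : Equiv.Perm (Fin n)} (z : TorusFix n γ) :
    ∀ (k : ℤ) (x : Fin n), z.1 ((γ ^ k) x) = z.1 x := by
  have h1 : ∀ x, z.1 (γ x) = z.1 x := by
    intro x; have h0 := z.2 (γ x); rw [Equiv.Perm.inv_apply_self] at h0; exact h0.symm
  intro k
  induction k using Int.induction_on with
  | zero => simp
  | succ k ih =>
      intro x
      have h2 : (γ ^ ((k : ℤ) + 1)) x = (γ ^ (k : ℤ)) (γ x) := by
        rw [zpow_add, zpow_one, Equiv.Perm.mul_apply]
      rw [h2, ih, h1]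
  | pred k ih =>
      intro x
      have h2 : (γ ^ (-(k : ℤ) - 1)) x = (γ ^ (-(k : ℤ))) (γ⁻¹ x) := by
        rw [sub_eq_add_neg, zpow_add, zpow_neg_one, Equiv.Perm.mul_apply]
      rw [h2, ih, z.2]

/-- A fixed point of `γ` descends to a function on the orbit space. -/
def zbar {γ : Equiv.Perm (Fin n)} (z : TorusFix n γ) : OQ n γ → Circle :=
  Quotient.lift z.1 (fun x y h => by
    obtain ⟨k, rfl⟩ := exists_zpow_of_mem_orbit (MulAction.orbitRel_apply.mp h)
    exact tf_apply_pow z k y)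

@[simp] theorem zbar_mk {γ : Equiv.Perm (Fin n)} (z : TorusFix n γ) (x : Fin n) :
    zbar z (omk γ x) = z.1 x := rfl

theorem orbit_smul_comm {γ g : Equiv.Perm (Fin n)} (hg : Commute γ g) {x y : Fin n}
    (h : x ∈ MulAction.orbit (Subgroup.zpowers γ) y) :
    g x ∈ MulAction.orbit (Subgroup.zpowers γ) (g y) := by
  obtain ⟨k, rfl⟩ := exists_zpow_of_mem_orbit h
  have h2 : g ((γ ^ k) y) = (γ ^ k) (g y) := by
    rw [← Equiv.Perm.mul_apply, ← (hg.zpow_left k).eq, Equiv.Perm.mul_apply]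
  rw [h2]; exact mem_orbit_zpow γ k (g y)

theorem commute_of_mem_centralizer {γ g : Equiv.Perm (Fin n)}
    (hg : g ∈ Subgroup.centralizer ({γ} : Set (Equiv.Perm (Fin n)))) : Commute γ g :=
  Subgroup.mem_centralizer_iff.mp hg γ (Set.mem_singleton γ)

/-- A centralizer element induces a permutation of the orbit space. -/
def operm (γ : Equiv.Perm (Fin n))
    (g : Subgroup.centralizer ({γ} : Set (Equiv.Perm (Fin n)))) :
    Equiv.Perm (OQ n γ) where
  toFun := Quotient.map ((g : Equiv.Perm (Fin n)) ·) (fun x y h =>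
    MulAction.orbitRel_apply.mpr
      (orbit_smul_comm (commute_of_mem_centralizer g.2) (MulAction.orbitRel_apply.mp h)))
  invFun := Quotient.map (((g : Equiv.Perm (Fin n))⁻¹) ·) (fun x y h =>
    MulAction.orbitRel_apply.mpr
      (orbit_smul_comm (commute_of_mem_centralizer g.2).inv_right
        (MulAction.orbitRel_apply.mp h)))
  left_inv := fun c => Quotient.inductionOn c fun x => by
    show omk γ ((g : Equiv.Perm (Fin n))⁻¹ ((g : Equiv.Perm (Fin n)) x)) = omk γ x
    rw [Equiv.Perm.inv_apply_self]
  right_inv := fun c => Quotient.inductionOn c fun x => by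
    show omk γ ((g : Equiv.Perm (Fin n)) ((g : Equiv.Perm (Fin n))⁻¹ x)) = omk γ x
    rw [Equiv.Perm.apply_inv_self]

@[simp] theorem operm_mk (γ : Equiv.Perm (Fin n))
    (g : Subgroup.centralizer ({γ} : Set (Equiv.Perm (Fin n)))) (x : Fin n) :
    operm γ g (omk γ x) = omk γ ((g : Equiv.Perm (Fin n)) x) := rfl

@[simp] theorem operm_symm_mk (γ : Equiv.Perm (Fin n))
    (g : Subgroup.centralizer ({γ} : Set (Equiv.Perm (Fin n)))) (x : Fin n) :
    (operm γ g).symm (omk γ x) = omk γ ((g : Equiv.Perm (Fin n))⁻¹ x) := rfl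

theorem osize_operm (γ : Equiv.Perm (Fin n))
    (g : Subgroup.centralizer ({γ} : Set (Equiv.Perm (Fin n)))) (c : OQ n γ) :
    osize γ (operm γ g c) = osize γ c := by
  refine Nat.card_congr (Equiv.subtypeEquiv
    ((g : Equiv.Perm (Fin n))⁻¹ : Equiv.Perm (Fin n)) fun x => ?_)
  constructor
  · intro h
    have h2 := congrArg (operm γ g).symm h
    rwa [operm_symm_mk, Equiv.symm_apply_apply] at h2
  · intro h
    have h2 := congrArg (operm γ g) h
    rwa [operm_mk, Equiv.Perm.apply_inv_self] at h2

theorem zbar_smul (γ : Equiv.Perm (Fin n))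
    (g : Subgroup.centralizer ({γ} : Set (Equiv.Perm (Fin n))))
    (z : TorusFix n γ) (c : OQ n γ) :
    zbar (g • z) c = zbar z ((operm γ g).symm c) :=
  Quotient.inductionOn c fun _ => rfl

end SymAux

namespace SymAux

open MulAction Function Subgroup

variable {n : ℕ}

/-- Every size-preserving permutation of the orbit space lifts to a centralizer element. -/
theorem exists_lift (γ : Equiv.Perm (Fin n)) (τ : Equiv.Perm (OQ n γ))
    (hτ : ∀ c, osize γ (τ c) = osize γ c) :
    ∃ g : Subgroup.centralizer ({γ} : Set (Equiv.Perm (Fin n))),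
      ∀ x : Fin n, omk γ ((g : Equiv.Perm (Fin n)) x) = τ (omk γ x) := by
  classical
  set p : OQ n γ → ℕ := fun c => Function.minimalPeriod (γ • ·) (Quotient.out c) with hpdef
  have hposize : ∀ c, p c = osize γ c := by
    intro c
    letI : Fintype (MulAction.orbit (Subgroup.zpowers γ) (Quotient.out c)) := Fintype.ofFinite _
    show Function.minimalPeriod (γ • ·) (Quotient.out c) = _
    rw [MulAction.minimalPeriod_eq_card, osize_eq_card_orbit, Nat.card_eq_fintype_card]
  have hppos : ∀ c, 0 < p c := fun c =>
    Nat.pos_of_ne_zero (NeZero.ne (Function.minimalPeriod (γ • ·) (Quotient.out c)))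
  have hmod : ∀ (c : OQ n γ) (k : ℕ),
      (γ ^ (k % p c)) (Quotient.out c) = (γ ^ k) (Quotient.out c) :=
    fun c k => MulAction.pow_smul_mod_minimalPeriod γ (Quotient.out c) k
  have huniq : ∀ (c : OQ n γ) (i j : ℕ), i < p c → j < p c →
      (γ ^ i) (Quotient.out c) = (γ ^ j) (Quotient.out c) → i = j := by
    intro c i j hi hj hij
    refine Function.iterate_injOn_Iio_minimalPeriod (f := (γ • ·)) (x := Quotient.out c)
      (Set.mem_Iio.mpr hi) (Set.mem_Iio.mpr hj) ?_
    show (γ • ·)^[i] (Quotient.out c) = (γ • ·)^[j] (Quotient.out c)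
    rw [smul_iterate_apply, smul_iterate_apply]
    exact hij
  have hex : ∀ x : Fin n, ∃ k : ℕ, k < p (omk γ x) ∧
      (γ ^ k) (Quotient.out (omk γ x)) = x := by
    intro x
    obtain ⟨m, hm⟩ := exists_zpow_of_mem_orbit (out_mem_orbit γ x)
    have h0 : 0 ≤ m % (p (omk γ x) : ℤ) :=
      Int.emod_nonneg m (by exact_mod_cast (hppos (omk γ x)).ne')
    have h1 : m % (p (omk γ x) : ℤ) < (p (omk γ x) : ℤ) :=
      Int.emod_lt_of_pos m (by exact_mod_cast hppos (omk γ x))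
    refine ⟨(m % (p (omk γ x) : ℤ)).toNat, by omega, ?_⟩
    calc (γ ^ (m % (p (omk γ x) : ℤ)).toNat) (Quotient.out (omk γ x))
        = (γ ^ (((m % (p (omk γ x) : ℤ)).toNat : ℤ))) (Quotient.out (omk γ x)) := by
          rw [zpow_natCast]
      _ = (γ ^ (m % (p (omk γ x) : ℤ))) (Quotient.out (omk γ x)) := by
          rw [Int.toNat_of_nonneg h0]
      _ = (γ ^ m) (Quotient.out (omk γ x)) :=
          MulAction.zpow_smul_mod_minimalPeriod γ (Quotient.out (omk γ x)) m
      _ = x := hm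
  choose κ hκlt hκ using hex
  have hmkpow : ∀ (k : ℕ) (c : OQ n γ), omk γ ((γ ^ k) (Quotient.out c)) = c := by
    intro k c
    rw [omk_pow, omk_out]
  set G : Fin n → Fin n := fun x => (γ ^ κ x) (Quotient.out (τ (omk γ x))) with hGdef
  set G' : Fin n → Fin n := fun x => (γ ^ κ x) (Quotient.out (τ⁻¹ (omk γ x))) with hG'def
  have hmkG : ∀ x, omk γ (G x) = τ (omk γ x) := fun x => hmkpow _ _
  have hmkG' : ∀ x, omk γ (G' x) = τ⁻¹ (omk γ x) := fun x => hmkpow _ _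
  have hpτ : ∀ c, p (τ c) = p c := fun c => by rw [hposize, hposize, hτ]
  have hpτ' : ∀ c, p (τ⁻¹ c) = p c := fun c => by
    have h0 := hpτ (τ⁻¹ c); rw [Equiv.Perm.apply_inv_self] at h0; exact h0.symm
  have hκG : ∀ x, κ (G x) = κ x := by
    intro x
    have h1 := hκ (G x)
    rw [hmkG x] at h1
    refine huniq (τ (omk γ x)) _ _ ?_ ?_ ?_
    · have := hκlt (G x); rwa [hmkG x] at this
    · rw [hpτ]; exact hκlt x
    · rw [h1, hGdef]
  have hκG' : ∀ x, κ (G' x) = κ x := by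
    intro x
    have h1 := hκ (G' x)
    rw [hmkG' x] at h1
    refine huniq (τ⁻¹ (omk γ x)) _ _ ?_ ?_ ?_
    · have := hκlt (G' x); rwa [hmkG' x] at this
    · rw [hpτ']; exact hκlt x
    · rw [h1, hG'def]
  have hGG' : ∀ x, G' (G x) = x := by
    intro x
    show (γ ^ κ (G x)) (Quotient.out (τ⁻¹ (omk γ (G x)))) = x
    rw [hκG, hmkG, Equiv.Perm.inv_apply_self]
    exact hκ x
  have hG'G : ∀ x, G (G' x) = x := by
    intro x
    show (γ ^ κ (G' x)) (Quotient.out (τ (omk γ (G' x)))) = x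
    rw [hκG', hmkG', Equiv.Perm.apply_inv_self]
    exact hκ x
  set g0 : Equiv.Perm (Fin n) := ⟨G, G', hGG', hG'G⟩ with hg0def
  have hcomm : ∀ x, γ (G x) = G (γ x) := by
    intro x
    have hc : omk γ (γ x) = omk γ x := omk_apply γ x
    have hκγ : κ (γ x) = (κ x + 1) % p (omk γ x) := by
      refine huniq (omk γ x) _ _ ?_ (Nat.mod_lt _ (hppos _)) ?_
      · have := hκlt (γ x); rwa [hc] at this
      · have h1 := hκ (γ x)
        rw [hc] at h1
        rw [h1, hmod]
        rw [pow_succ', Equiv.Perm.mul_apply, hκ x]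
    show γ (G x) = (γ ^ κ (γ x)) (Quotient.out (τ (omk γ (γ x))))
    rw [hκγ, hc, hGdef]
    show γ ((γ ^ κ x) (Quotient.out (τ (omk γ x))))
      = (γ ^ ((κ x + 1) % p (omk γ x))) (Quotient.out (τ (omk γ x)))
    rw [← Equiv.Perm.mul_apply, ← pow_succ']
    rw [← hpτ (omk γ x)]
    exact (hmod (τ (omk γ x)) (κ x + 1)).symm
  have hmem : g0 ∈ Subgroup.centralizer ({γ} : Set (Equiv.Perm (Fin n))) := by
    rw [Subgroup.mem_centralizer_iff]
    intro h hh
    have hh' : h = γ := hh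
    rw [hh']
    refine Equiv.ext fun x => ?_
    show γ (g0 x) = g0 (γ x)
    exact hcomm x
  exact ⟨⟨g0, hmem⟩, fun x => hmkG x⟩

/-- Equality in a symmetric product from a permutation relating representatives. -/
theorem sym_mk_eq {r : ℕ} {w w' : Fin r → Circle}
    (h : ∃ σ : Equiv.Perm (Fin r), σ • w' = w) :
    (Quotient.mk (MulAction.orbitRel (Equiv.Perm (Fin r)) (Fin r → Circle)) w : SymTorus r) =
      Quotient.mk (MulAction.orbitRel (Equiv.Perm (Fin r)) (Fin r → Circle)) w' :=
  Quotient.sound (MulAction.orbitRel_apply.mpr (MulAction.mem_orbit_iff.mpr h))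

theorem sym_mk_exact {r : ℕ} {w w' : Fin r → Circle}
    (h : (Quotient.mk (MulAction.orbitRel (Equiv.Perm (Fin r)) (Fin r → Circle)) w : SymTorus r)
      = Quotient.mk (MulAction.orbitRel (Equiv.Perm (Fin r)) (Fin r → Circle)) w') :
    ∃ σ : Equiv.Perm (Fin r), σ • w' = w :=
  MulAction.mem_orbit_iff.mp (MulAction.orbitRel_apply.mp (Quotient.exact h))

end SymAux

instance (r : ℕ) : ContinuousConstSMul (Equiv.Perm (Fin r)) (Fin r → Circle) := by
  refine ⟨fun σ => ?_⟩
  show Continuous fun z : Fin r → Circle => σ • z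
  exact continuous_pi fun i => continuous_apply (σ⁻¹ i)

instance (r : ℕ) : ProperlyDiscontinuousSMul (Equiv.Perm (Fin r)) (Fin r → Circle) :=
  ⟨fun _ _ => Set.toFinite _⟩

instance (n : ℕ) (γ : Equiv.Perm (Fin n)) : CompactSpace (TorusFix n γ) := by
  have hset : {z : Fin n → Circle | ∀ i, z (γ⁻¹ i) = z i}
      = ⋂ i, {z : Fin n → Circle | z (γ⁻¹ i) = z i} := by
    ext z; simp [Set.mem_iInter]
  have hc : IsClosed {z : Fin n → Circle | ∀ i, z (γ⁻¹ i) = z i} := by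
    rw [hset]
    exact isClosed_iInter fun i => isClosed_eq (continuous_apply _) (continuous_apply _)
  exact isCompact_iff_compactSpace.mp hc.isCompact

/-- if `γ ∈ S_n` has cycle type with `r_j` cycles of length `n_j`
(`n_j` pairwise distinct), then `(𝕋ⁿ)^γ / Z(γ)` is homeomorphic to `∏_j Sym^{r_j} 𝕋`;
moreover the elements of `Z(γ)` preserving each cycle of `γ` (the cyclic factors
`(ℤ/n_j)^{r_j}` of `Z(γ)`) act trivially on `(𝕋ⁿ)^γ`. -/
theorem fixed_set_mod_centralizer_is_product_of_symmetric_products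
    (n l : ℕ) (γ : Equiv.Perm (Fin n)) (nn rr : Fin l → ℕ)
    (hdistinct : Function.Injective nn)
    (horb : ∀ x : Fin n, ∃ j, Nat.card (MulAction.orbit (Subgroup.zpowers γ) x) = nn j)
    (hcount : ∀ j, Nat.card {c : Quotient (MulAction.orbitRel (Subgroup.zpowers γ) (Fin n)) //
        Nat.card {x : Fin n // Quotient.mk (MulAction.orbitRel (Subgroup.zpowers γ) (Fin n)) x = c}
          = nn j} = rr j) :
    Nonempty ((Quotient (MulAction.orbitRel
        (Subgroup.centralizer ({γ} : Set (Equiv.Perm (Fin n)))) (TorusFix n γ))) ≃ₜ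
      (∀ j : Fin l, SymTorus (rr j))) ∧
    (∀ g : Subgroup.centralizer ({γ} : Set (Equiv.Perm (Fin n))),
      (∀ x : Fin n, (g : Equiv.Perm (Fin n)) x ∈ MulAction.orbit (Subgroup.zpowers γ) x) →
      ∀ z : TorusFix n γ, g • z = z) := by
  classical
  open SymAux in
  constructor
  · -- the homeomorphism
    have hJex : ∀ c : OQ n γ, ∃ j, osize γ c = nn j := by
      intro c
      obtain ⟨j, hj⟩ := horb (Quotient.out c)
      exact ⟨j, by rw [osize_eq_card_orbit]; exact hj⟩
    choose J hJ using hJex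
    have hJuniq : ∀ (c : OQ n γ) (j : Fin l), osize γ c = nn j → J c = j := fun c j h =>
      hdistinct ((hJ c).symm.trans h)
    have hcardF : ∀ j, Nat.card {c : OQ n γ // J c = j} = rr j := by
      intro j
      rw [← hcount j]
      exact Nat.card_congr (Equiv.subtypeEquivRight fun c =>
        ⟨fun h => (hJ c).trans (congrArg nn h), fun h => hJuniq c j h⟩)
    haveI : Finite (OQ n γ) := Quotient.finite _
    let E : ∀ j, {c : OQ n γ // J c = j} ≃ Fin (rr j) := fun j =>
      Finite.equivFinOfCardEq (hcardF j)
    let tup : TorusFix n γ → ∀ j, Fin (rr j) → Circle := fun z j i =>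
      zbar z ((E j).symm i).val
    have tup_cont : ∀ j, Continuous fun z => tup z j := by
      intro j
      refine continuous_pi fun i => ?_
      have heq : (fun z : TorusFix n γ => tup z j i)
          = fun z : TorusFix n γ => z.1 (Quotient.out ((E j).symm i).val) := by
        funext z
        show zbar z ((E j).symm i).val = z.1 (Quotient.out ((E j).symm i).val)
        conv_lhs => rw [← omk_out γ ((E j).symm i).val]
        rfl
      rw [heq]
      exact (continuous_apply _).comp continuous_subtype_val
    let Phat : TorusFix n γ → ∀ j : Fin l, SymTorus (rr j) := fun z j =>
      Quotient.mk (MulAction.orbitRel (Equiv.Perm (Fin (rr j))) (Fin (rr j) → Circle)) (tup z j)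
    have hJop : ∀ (g : Subgroup.centralizer ({γ} : Set (Equiv.Perm (Fin n)))) (c : OQ n γ),
        J (operm γ g c) = J c := fun g c => hJuniq _ _ (by rw [osize_operm, hJ])
    have hsound : ∀ z z' : TorusFix n γ,
        (∃ g : Subgroup.centralizer ({γ} : Set (Equiv.Perm (Fin n))), g • z' = z) →
        Phat z = Phat z' := by
      rintro z z' ⟨g, rfl⟩
      funext j
      let su : {c : OQ n γ // J c = j} ≃ {c : OQ n γ // J c = j} :=
        (operm γ g).subtypeEquiv (fun c => by rw [hJop g c])
      let σ : Equiv.Perm (Fin (rr j)) := (E j).symm.trans (su.trans (E j))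
      refine sym_mk_eq ⟨σ, ?_⟩
      funext i
      show tup z' j (σ⁻¹ i) = tup (g • z') j i
      show zbar z' ((E j).symm (σ⁻¹ i)).val = zbar (g • z') ((E j).symm i).val
      rw [zbar_smul]
      have h1 : (E j).symm (σ⁻¹ i) = su.symm ((E j).symm i) := by
        show (E j).symm (σ.symm i) = su.symm ((E j).symm i)
        simp only [σ, Equiv.symm_trans_apply, Equiv.symm_symm, Equiv.symm_apply_apply]
      rw [h1]
      rfl
    let Φ : Quotient (MulAction.orbitRel
        (Subgroup.centralizer ({γ} : Set (Equiv.Perm (Fin n)))) (TorusFix n γ)) →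
        ∀ j : Fin l, SymTorus (rr j) :=
      Quotient.lift Phat (fun z z' h => hsound z z'
        (MulAction.mem_orbit_iff.mp (MulAction.orbitRel_apply.mp h)))
    have hinj : Function.Injective Φ := by
      intro a b
      refine Quotient.inductionOn₂ a b ?_
      intro z z' h
      have hσex : ∀ j, ∃ σ : Equiv.Perm (Fin (rr j)), σ • tup z' j = tup z j := fun j =>
        sym_mk_exact (congrFun h j)
      choose σ hσ using hσex
      let ρ : ∀ j, Equiv.Perm {c : OQ n γ // J c = j} := fun j =>
        (E j).trans ((σ j).trans (E j).symm)
      let d : (Σ j, {c : OQ n γ // J c = j}) ≃ OQ n γ := Equiv.sigmaFiberEquiv J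
      let τ : Equiv.Perm (OQ n γ) := d.symm.trans ((Equiv.sigmaCongrRight ρ).trans d)
      have hτfib : ∀ (j) (cc : {c : OQ n γ // J c = j}), τ cc.val = (ρ j cc).val := by
        rintro j ⟨c, rfl⟩
        rfl
      have hτJ : ∀ c, J (τ c) = J c := by
        intro c
        rw [hτfib (J c) ⟨c, rfl⟩]
        exact (ρ (J c) ⟨c, rfl⟩).2
      have hτsize : ∀ c, osize γ (τ c) = osize γ c := fun c => by rw [hJ, hJ, hτJ]
      have hτsymm : ∀ (j) (cc : {c : OQ n γ // J c = j}),
          τ.symm cc.val = ((ρ j).symm cc).val := by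
        intro j cc
        have h2 := hτfib j ((ρ j).symm cc)
        rw [Equiv.apply_symm_apply] at h2
        exact (Equiv.symm_apply_eq τ).mpr h2.symm
      obtain ⟨g, hg⟩ := exists_lift γ τ hτsize
      have hzz : ∀ c, zbar z c = zbar z' (τ.symm c) := by
        intro c
        have h3 := congrFun (hσ (J c)) (E (J c) ⟨c, rfl⟩)
        have h4 : tup z (J c) (E (J c) ⟨c, rfl⟩) = zbar z c := by
          show zbar z ((E (J c)).symm (E (J c) ⟨c, rfl⟩)).val = zbar z c
          rw [Equiv.symm_apply_apply]
        have h5 : τ.symm c = ((E (J c)).symm ((σ (J c))⁻¹ (E (J c) ⟨c, rfl⟩))).val := by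
          have h6 := hτsymm (J c) ⟨c, rfl⟩
          rw [h6]
          rfl
        rw [← h4, ← h3, h5]
        rfl
      refine Quotient.sound (MulAction.orbitRel_apply.mpr
        (MulAction.mem_orbit_iff.mpr ⟨g, ?_⟩))
      apply Subtype.ext
      funext x
      show z'.1 ((g : Equiv.Perm (Fin n))⁻¹ x) = z.1 x
      have h6 : omk γ ((g : Equiv.Perm (Fin n))⁻¹ x) = τ.symm (omk γ x) := by
        rw [Equiv.eq_symm_apply]
        have h7 := hg ((g : Equiv.Perm (Fin n))⁻¹ x)
        rw [Equiv.Perm.apply_inv_self] at h7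
        exact h7.symm
      calc z'.1 ((g : Equiv.Perm (Fin n))⁻¹ x)
          = zbar z' (omk γ ((g : Equiv.Perm (Fin n))⁻¹ x)) := rfl
        _ = zbar z' (τ.symm (omk γ x)) := by rw [h6]
        _ = zbar z (omk γ x) := (hzz _).symm
        _ = z.1 x := rfl
    have hsurj : Function.Surjective Φ := by
      intro w
      let wrep : ∀ j, Fin (rr j) → Circle := fun j => Quotient.out (w j)
      let v : OQ n γ → Circle := fun c => wrep (J c) (E (J c) ⟨c, rfl⟩)
      have hz2 : ∀ i, (fun x => v (omk γ x)) (γ⁻¹ i) = (fun x => v (omk γ x)) i := by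
        intro i
        show v (omk γ (γ⁻¹ i)) = v (omk γ i)
        rw [omk_inv]
      refine ⟨Quotient.mk _ (⟨fun x => v (omk γ x), hz2⟩ : TorusFix n γ), ?_⟩
      show Phat _ = w
      funext j
      have hzb : ∀ c, zbar (⟨fun x => v (omk γ x), hz2⟩ : TorusFix n γ) c = v c := fun c =>
        Quotient.inductionOn c fun x => rfl
      have hvv : ∀ (cc : {c : OQ n γ // J c = j}), v cc.val = wrep j (E j cc) := by
        rintro ⟨c, rfl⟩
        rfl
      have htup : tup (⟨fun x => v (omk γ x), hz2⟩ : TorusFix n γ) j = wrep j := by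
        funext i
        show zbar (⟨fun x => v (omk γ x), hz2⟩ : TorusFix n γ) ((E j).symm i).val = wrep j i
        rw [hzb, hvv ((E j).symm i), Equiv.apply_symm_apply]
      show Quotient.mk _ (tup _ j) = w j
      rw [htup]
      exact Quotient.out_eq (w j)
    have hcont : Continuous Φ := by
      refine Continuous.quotient_lift ?_ _
      refine continuous_pi fun j => ?_
      show Continuous fun z => Quotient.mk
        (MulAction.orbitRel (Equiv.Perm (Fin (rr j))) (Fin (rr j) → Circle)) (tup z j)
      exact Continuous.comp continuous_quotient_mk' (tup_cont j)
    exact ⟨Continuous.homeoOfEquivCompactToT2 (f := Equiv.ofBijective Φ ⟨hinj, hsurj⟩) hcont⟩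
  · -- triviality of the cyclic factors
    intro g hg z
    apply Subtype.ext
    funext i
    show z.1 ((g : Equiv.Perm (Fin n))⁻¹ i) = z.1 i
    have h1 := hg ((g : Equiv.Perm (Fin n))⁻¹ i)
    rw [Equiv.Perm.apply_inv_self] at h1
    obtain ⟨k, hk⟩ := SymAux.exists_zpow_of_mem_orbit h1
    have h2 := SymAux.tf_apply_pow z k ((g : Equiv.Perm (Fin n))⁻¹ i)
    rw [hk] at h2
    exact h2.symm
end
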